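/- Let $R$ and $S$ be commutative algebras over a field $k$, $I \subseteq R$ and $J \subseteq S$ ideals, $T = R \otimes_k S$, $P = I + J$. For all $r \ge 0$, $s \ge 0$ and $0 \le i \le s$, the intersection of $I^{r+i}J^{s-i}$ with the ideal $\sum_{0 \le j \le s, j \ne i} I^{r+j}J^{s-j} + I^r P^{s+1}$ is contained in $I^r P^{s+1}$. -/

import Mathlib

set_option maxHeartbeats 1000000

open TensorProduct

section Aux

variable {k : Type*} [Field k]

/-- Core linear algebra fact over a field: if `x` lies in the image of `M₁ ⊗ N₁` and is killed
by `q₁ ⊗ q₂` where `ker q₁ = M₂`, `ker q₂ = N₂`, then `x` lies in the image of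
`M₂ ⊗ N₁ + M₁ ⊗ N₂`. -/
theorem core_tensor_inter {V W V' W' : Type*}
    [AddCommGroup V] [Module k V] [AddCommGroup W] [Module k W]
    [AddCommGroup V'] [Module k V'] [AddCommGroup W'] [Module k W']
    (M₁ : Submodule k V) (N₁ : Submodule k W)
    (q₁ : V →ₗ[k] V') (q₂ : W →ₗ[k] W')
    (x : V ⊗[k] W)
    (hx : x ∈ LinearMap.range (TensorProduct.mapIncl M₁ N₁))
    (hker : TensorProduct.map q₁ q₂ x = 0) :
    x ∈ LinearMap.range (TensorProduct.mapIncl ((LinearMap.ker q₁) ⊓ M₁) N₁) ⊔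
      LinearMap.range (TensorProduct.mapIncl M₁ ((LinearMap.ker q₂) ⊓ N₁)) := by
  obtain ⟨t, rfl⟩ := hx
  -- kernels inside M₁, N₁
  let K₁ : Submodule k M₁ := LinearMap.ker (q₁ ∘ₗ M₁.subtype)
  let K₂ : Submodule k N₁ := LinearMap.ker (q₂ ∘ₗ N₁.subtype)
  let j₁ : (M₁ ⧸ K₁) →ₗ[k] V' := K₁.liftQ (q₁ ∘ₗ M₁.subtype) le_rfl
  let j₂ : (N₁ ⧸ K₂) →ₗ[k] W' := K₂.liftQ (q₂ ∘ₗ N₁.subtype) le_rfl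
  have hj₁ : Function.Injective j₁ := by
    rw [← LinearMap.ker_eq_bot]
    exact Submodule.ker_liftQ_eq_bot K₁ _ le_rfl le_rfl
  have hj₂ : Function.Injective j₂ := by
    rw [← LinearMap.ker_eq_bot]
    exact Submodule.ker_liftQ_eq_bot K₂ _ le_rfl le_rfl
  have hinj : Function.Injective (TensorProduct.map j₁ j₂) := by
    rw [← LinearMap.lTensor_comp_rTensor]
    exact (Module.Flat.lTensor_preserves_injective_linearMap j₂ hj₂).comp
      (Module.Flat.rTensor_preserves_injective_linearMap j₁ hj₁)
  have hfact : TensorProduct.map q₁ q₂ ∘ₗ TensorProduct.mapIncl M₁ N₁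
      = TensorProduct.map j₁ j₂ ∘ₗ TensorProduct.map K₁.mkQ K₂.mkQ := by
    rw [← TensorProduct.map_comp, ← TensorProduct.map_comp,
      Submodule.liftQ_mkQ, Submodule.liftQ_mkQ]
  have ht0 : TensorProduct.map K₁.mkQ K₂.mkQ t = 0 := by
    apply hinj
    rw [map_zero]
    have := LinearMap.congr_fun hfact t
    simpa using this.symm.trans hker
  have hex₁ : Function.Exact (⇑K₁.subtype) (⇑K₁.mkQ) := by
    have h := LinearMap.exact_subtype_ker_map K₁.mkQ
    rwa [Submodule.ker_mkQ] at h
  have hex₂ : Function.Exact (⇑K₂.subtype) (⇑K₂.mkQ) := by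
    have h := LinearMap.exact_subtype_ker_map K₂.mkQ
    rwa [Submodule.ker_mkQ] at h
  have hmem : t ∈ LinearMap.ker (TensorProduct.map K₁.mkQ K₂.mkQ) := ht0
  rw [TensorProduct.map_ker hex₁ (Submodule.mkQ_surjective K₁)
      hex₂ (Submodule.mkQ_surjective K₂)] at hmem
  obtain ⟨u, hu, v, hv, rfl⟩ := Submodule.mem_sup.1 hmem
  obtain ⟨u', rfl⟩ := hu
  obtain ⟨v', rfl⟩ := hv
  rw [map_add]
  let ι₂ : K₂ →ₗ[k] ↥((LinearMap.ker q₂) ⊓ N₁) :=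
    LinearMap.codRestrict _ (N₁.subtype ∘ₗ K₂.subtype)
      (fun c => ⟨LinearMap.mem_ker.1 c.2, (c : N₁).2⟩)
  let ι₁ : K₁ →ₗ[k] ↥((LinearMap.ker q₁) ⊓ M₁) :=
    LinearMap.codRestrict _ (M₁.subtype ∘ₗ K₁.subtype)
      (fun c => ⟨LinearMap.mem_ker.1 c.2, (c : M₁).2⟩)
  have h1 : TensorProduct.mapIncl M₁ N₁ (LinearMap.lTensor M₁ K₂.subtype u')
      ∈ LinearMap.range (TensorProduct.mapIncl M₁ ((LinearMap.ker q₂) ⊓ N₁)) := by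
    refine ⟨LinearMap.lTensor M₁ ι₂ u', ?_⟩
    have e1 : TensorProduct.mapIncl M₁ ((LinearMap.ker q₂) ⊓ N₁) ∘ₗ LinearMap.lTensor M₁ ι₂
        = TensorProduct.mapIncl M₁ N₁ ∘ₗ LinearMap.lTensor M₁ K₂.subtype := by
      rw [TensorProduct.mapIncl, TensorProduct.mapIncl, LinearMap.map_comp_lTensor,
        LinearMap.map_comp_lTensor]
      rfl
    exact LinearMap.congr_fun e1 u'
  have h2 : TensorProduct.mapIncl M₁ N₁ (LinearMap.rTensor N₁ K₁.subtype v')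
      ∈ LinearMap.range (TensorProduct.mapIncl ((LinearMap.ker q₁) ⊓ M₁) N₁) := by
    refine ⟨LinearMap.rTensor N₁ ι₁ v', ?_⟩
    have e1 : TensorProduct.mapIncl ((LinearMap.ker q₁) ⊓ M₁) N₁ ∘ₗ LinearMap.rTensor N₁ ι₁
        = TensorProduct.mapIncl M₁ N₁ ∘ₗ LinearMap.rTensor N₁ K₁.subtype := by
      rw [TensorProduct.mapIncl, TensorProduct.mapIncl, LinearMap.map_comp_rTensor,
        LinearMap.map_comp_rTensor]
      rfl
    exact LinearMap.congr_fun e1 v'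
  exact add_mem (Submodule.mem_sup_right h1) (Submodule.mem_sup_left h2)

theorem mul_mem_range_mapIncl {R S : Type*} [CommRing R] [CommRing S]
    [Algebra k R] [Algebra k S] (A : Ideal R) (B : Ideal S) (t z : R ⊗[k] S)
    (hz : z ∈ LinearMap.range
      (TensorProduct.mapIncl (A.restrictScalars k) (B.restrictScalars k))) :
    t * z ∈ LinearMap.range
      (TensorProduct.mapIncl (A.restrictScalars k) (B.restrictScalars k)) := by
  rw [TensorProduct.range_mapIncl, Submodule.map₂_eq_span_image2] at hz ⊢
  induction t using TensorProduct.induction_on with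
  | zero => simpa using Submodule.zero_mem _
  | tmul r s =>
    refine Submodule.span_induction ?_ ?_ ?_ ?_ hz
    · rintro w ⟨x, hx, y, hy, rfl⟩
      apply Submodule.subset_span
      refine ⟨r * x, A.mul_mem_left r hx, s * y, B.mul_mem_left s hy, ?_⟩
      simp [Algebra.TensorProduct.tmul_mul_tmul]
    · simp
    · intro a b _ _ ha hb; rw [mul_add]; exact Submodule.add_mem _ ha hb
    · intro c a _ ha; rw [Algebra.mul_smul_comm]; exact Submodule.smul_mem _ _ ha
  | add t₁ t₂ h₁ h₂ => rw [add_mul]; exact Submodule.add_mem _ h₁ h₂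

theorem ideal_mul_restrict {R S : Type*} [CommRing R] [CommRing S]
    [Algebra k R] [Algebra k S] (A : Ideal R) (B : Ideal S) :
    Submodule.restrictScalars k
      (A.map (algebraMap R (R ⊗[k] S)) *
        B.map ((Algebra.TensorProduct.includeRight : S →ₐ[k] R ⊗[k] S) : S →+* R ⊗[k] S))
      = LinearMap.range
        (TensorProduct.mapIncl (A.restrictScalars k) (B.restrictScalars k)) := by
  apply le_antisymm
  · let K : Ideal (R ⊗[k] S) :=
      { carrier := LinearMap.range
          (TensorProduct.mapIncl (A.restrictScalars k) (B.restrictScalars k))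
        add_mem' := fun h h' => Submodule.add_mem _ h h'
        zero_mem' := Submodule.zero_mem _
        smul_mem' := fun t z hz => by
          simpa [smul_eq_mul] using mul_mem_range_mapIncl A B t z hz }
    intro x hx
    have hle : A.map (algebraMap R (R ⊗[k] S)) *
        B.map ((Algebra.TensorProduct.includeRight : S →ₐ[k] R ⊗[k] S) : S →+* R ⊗[k] S) ≤ K := by
      rw [Ideal.mul_le]
      intro u hu v hv
      have hu' : u ∈ Submodule.span (R ⊗[k] S) ((algebraMap R (R ⊗[k] S)) '' A) := hu
      refine Submodule.span_induction (p := fun u _ => ∀ v,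
        v ∈ B.map ((Algebra.TensorProduct.includeRight : S →ₐ[k] R ⊗[k] S) : S →+* R ⊗[k] S) →
          u * v ∈ K) ?_ ?_ ?_ ?_ hu' v hv
      · rintro _ ⟨a, ha, rfl⟩ v hv
        have hv' : v ∈ Submodule.span (R ⊗[k] S)
            (((Algebra.TensorProduct.includeRight : S →ₐ[k] R ⊗[k] S) : S →+* R ⊗[k] S) '' B) := hv
        refine Submodule.span_induction
          (p := fun v _ => (algebraMap R (R ⊗[k] S)) a * v ∈ K) ?_ ?_ ?_ ?_ hv'
        · rintro _ ⟨b, hb, rfl⟩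
          show (algebraMap R (R ⊗[k] S)) a *
              ((Algebra.TensorProduct.includeRight : S →ₐ[k] R ⊗[k] S) : S →+* R ⊗[k] S) b
            ∈ LinearMap.range (TensorProduct.mapIncl (A.restrictScalars k) (B.restrictScalars k))
          rw [TensorProduct.range_mapIncl, Submodule.map₂_eq_span_image2]
          apply Submodule.subset_span
          refine ⟨a, ha, b, hb, ?_⟩
          simp [Algebra.TensorProduct.algebraMap_apply, Algebra.TensorProduct.includeRight_apply,
            Algebra.TensorProduct.tmul_mul_tmul]
        · simp [K.zero_mem]
        · intro v₁ v₂ _ _ h₁ h₂; rw [mul_add]; exact K.add_mem h₁ h₂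
        · intro c v _ h
          rw [smul_eq_mul, mul_left_comm]
          exact K.mul_mem_left c h
      · intro v _; rw [zero_mul]; exact K.zero_mem
      · intro u₁ u₂ _ _ h₁ h₂ v hv; rw [add_mul]; exact K.add_mem (h₁ v hv) (h₂ v hv)
      · intro c u _ h v hv
        rw [smul_eq_mul, mul_assoc]
        exact K.mul_mem_left c (h v hv)
    exact hle hx
  · rw [TensorProduct.range_mapIncl, Submodule.map₂_eq_span_image2, Submodule.span_le]
    rintro w ⟨x, hx, y, hy, rfl⟩
    show (x ⊗ₜ[k] y : R ⊗[k] S) ∈ Submodule.restrictScalars k _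
    rw [Submodule.restrictScalars_mem]
    have : (x ⊗ₜ[k] y : R ⊗[k] S) = (algebraMap R (R ⊗[k] S) x) *
        ((Algebra.TensorProduct.includeRight : S →ₐ[k] R ⊗[k] S) y) := by
      simp [Algebra.TensorProduct.algebraMap_apply, Algebra.TensorProduct.includeRight_apply,
        Algebra.TensorProduct.tmul_mul_tmul]
    rw [this]
    exact Ideal.mul_mem_mul (Ideal.mem_map_of_mem _ hx) (Ideal.mem_map_of_mem _ hy)

end Aux

theorem pow_add_le_sup {Q : Type*} [CommRing Q] (A B : Ideal Q) (m n N : ℕ)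
    (h : m + n ≤ N + 1) : (A ⊔ B) ^ N ≤ A ^ m ⊔ B ^ n := by
  rw [← Ideal.add_eq_sup, add_pow, Ideal.sum_eq_sup]
  apply Finset.sup_le
  intro t ht
  simp only [Finset.mem_range] at ht
  by_cases hm : m ≤ t
  · exact Ideal.mul_le_left.trans (Ideal.mul_le_left.trans
      ((Ideal.pow_le_pow_right hm).trans le_sup_left))
  · refine Ideal.mul_le_left.trans (Ideal.mul_le_right.trans
      ((Ideal.pow_le_pow_right ?_).trans le_sup_right))
    omega

theorem inter_summand_subset {k R S : Type*} [Field k] [CommRing R] [CommRing S]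
    [Algebra k R] [Algebra k S] (I : Ideal R) (J : Ideal S)
    (I' J' P : Ideal (R ⊗[k] S))
    (hI' : I' = I.map (algebraMap R (R ⊗[k] S)))
    (hJ' : J' = J.map ((Algebra.TensorProduct.includeRight : S →ₐ[k] R ⊗[k] S) : S →+* R ⊗[k] S))
    (hP : P = I' + J') (r s i : ℕ) (hi : i ≤ s) :
    I' ^ (r + i) * J' ^ (s - i) ⊓
        ((∑ j ∈ (Finset.range (s + 1)).erase i, I' ^ (r + j) * J' ^ (s - j))
          + I' ^ r * P ^ (s + 1))
      ≤ I' ^ r * P ^ (s + 1) := by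
  subst hP
  intro x hx
  obtain ⟨hx1, hx2⟩ := hx
  -- quotient algebra maps
  let q₁ := Ideal.Quotient.mkₐ k (I ^ (r + i + 1))
  let q₂ := Ideal.Quotient.mkₐ k (J ^ (s - i + 1))
  let π := Algebra.TensorProduct.map q₁ q₂
  have hIle : (I ^ (r + i + 1)).map (algebraMap R (R ⊗[k] S)) ≤ RingHom.ker π := by
    rw [Ideal.map_le_iff_le_comap]
    intro z hz
    simp only [Ideal.mem_comap, RingHom.mem_ker, π]
    rw [Algebra.TensorProduct.algebraMap_apply, Algebra.TensorProduct.map_tmul]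
    have h0 : q₁ ((algebraMap R R) z) = 0 := by
      simpa [q₁, Ideal.Quotient.mkₐ_eq_mk, Ideal.Quotient.eq_zero_iff_mem] using hz
    rw [h0, TensorProduct.zero_tmul]
  have hJle : (J ^ (s - i + 1)).map
      ((Algebra.TensorProduct.includeRight : S →ₐ[k] R ⊗[k] S) : S →+* R ⊗[k] S)
      ≤ RingHom.ker π := by
    rw [Ideal.map_le_iff_le_comap]
    intro z hz
    simp only [Ideal.mem_comap, RingHom.mem_ker, π]
    have hz1 : ((Algebra.TensorProduct.includeRight : S →ₐ[k] R ⊗[k] S) : S →+* R ⊗[k] S) z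
        = (1 : R) ⊗ₜ[k] z := rfl
    rw [hz1, Algebra.TensorProduct.map_tmul]
    have h0 : q₂ z = 0 := by
      simpa [q₂, Ideal.Quotient.mkₐ_eq_mk, Ideal.Quotient.eq_zero_iff_mem] using hz
    rw [h0, TensorProduct.tmul_zero]
  have hπx : π x = 0 := by
    have hle : (∑ j ∈ (Finset.range (s + 1)).erase i, I' ^ (r + j) * J' ^ (s - j))
        + I' ^ r * (I' + J') ^ (s + 1) ≤ RingHom.ker π := by
      rw [Ideal.add_eq_sup]
      apply sup_le
      · rw [Ideal.sum_eq_sup]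
        apply Finset.sup_le
        intro j hj
        simp only [Finset.mem_erase, Finset.mem_range] at hj
        rcases lt_or_gt_of_ne hj.1 with hji | hji
        · -- j < i : use the J-side
          refine le_trans (le_trans Ideal.mul_le_right ?_) hJle
          rw [Ideal.map_pow, hJ']
          exact Ideal.pow_le_pow_right (by omega)
        · -- i < j : use the I-side
          refine le_trans (le_trans Ideal.mul_le_left ?_) hIle
          rw [Ideal.map_pow, hI']
          exact Ideal.pow_le_pow_right (by omega)
      · have h1 : (I' ⊔ J') ^ (s + 1) ≤ I' ^ (i + 1) ⊔ J' ^ (s - i + 1) :=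
          pow_add_le_sup _ _ _ _ _ (by omega)
        rw [Ideal.add_eq_sup]
        calc I' ^ r * (I' ⊔ J') ^ (s + 1)
            ≤ I' ^ r * (I' ^ (i + 1) ⊔ J' ^ (s - i + 1)) := Ideal.mul_mono_right h1
          _ = I' ^ r * I' ^ (i + 1) ⊔ I' ^ r * J' ^ (s - i + 1) := Ideal.mul_sup _ _ _
          _ ≤ _ := by
              apply sup_le
              · rw [← pow_add, show r + (i + 1) = r + i + 1 from rfl]
                exact le_trans (le_of_eq (by rw [Ideal.map_pow, ← hI'])) hIle
              · exact le_trans Ideal.mul_le_right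
                  (le_trans (le_of_eq (by rw [Ideal.map_pow, ← hJ'])) hJle)
    exact hle hx2
  -- move to the submodule picture
  have hx1' : x ∈ LinearMap.range (TensorProduct.mapIncl
      ((I ^ (r + i)).restrictScalars k) ((J ^ (s - i)).restrictScalars k)) := by
    rw [← ideal_mul_restrict, Submodule.restrictScalars_mem]
    rw [hI', hJ', ← Ideal.map_pow, ← Ideal.map_pow] at hx1
    exact hx1
  have hπlin : TensorProduct.map q₁.toLinearMap q₂.toLinearMap x = 0 := by
    have hco : TensorProduct.map q₁.toLinearMap q₂.toLinearMap = π.toLinearMap :=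
      TensorProduct.ext' fun a b => rfl
    rw [hco]
    exact hπx
  have hcore := core_tensor_inter ((I ^ (r + i)).restrictScalars k)
    ((J ^ (s - i)).restrictScalars k) q₁.toLinearMap q₂.toLinearMap x hx1' hπlin
  have hkq₁ : LinearMap.ker q₁.toLinearMap ⊓ (I ^ (r + i)).restrictScalars k
      = (I ^ (r + i + 1)).restrictScalars k := by
    have hker : LinearMap.ker q₁.toLinearMap = (I ^ (r + i + 1)).restrictScalars k := by
      ext z
      simp [LinearMap.mem_ker, q₁, Ideal.Quotient.eq_zero_iff_mem]
    rw [hker]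
    apply inf_eq_left.2
    intro z hz
    exact Ideal.pow_le_pow_right (by omega) hz
  have hkq₂ : LinearMap.ker q₂.toLinearMap ⊓ (J ^ (s - i)).restrictScalars k
      = (J ^ (s - i + 1)).restrictScalars k := by
    have hker : LinearMap.ker q₂.toLinearMap = (J ^ (s - i + 1)).restrictScalars k := by
      ext z
      simp [LinearMap.mem_ker, q₂, Ideal.Quotient.eq_zero_iff_mem]
    rw [hker]
    apply inf_eq_left.2
    intro z hz
    exact Ideal.pow_le_pow_right (by omega) hz
  rw [hkq₁, hkq₂] at hcore
  obtain ⟨u, hu, v, hv, rfl⟩ := Submodule.mem_sup.1 hcore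
  -- convert back to ideals
  have hu' : u ∈ I' ^ (r + i + 1) * J' ^ (s - i) := by
    have h := (ideal_mul_restrict (k := k) (I ^ (r + i + 1)) (J ^ (s - i))).ge hu
    rw [Submodule.restrictScalars_mem] at h
    rw [hI', hJ', ← Ideal.map_pow, ← Ideal.map_pow]
    exact h
  have hv' : v ∈ I' ^ (r + i) * J' ^ (s - i + 1) := by
    have h := (ideal_mul_restrict (k := k) (I ^ (r + i)) (J ^ (s - i + 1))).ge hv
    rw [Submodule.restrictScalars_mem] at h
    rw [hI', hJ', ← Ideal.map_pow, ← Ideal.map_pow]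
    exact h
  have hIP : I' ≤ I' ⊔ J' := le_sup_left
  have hJP : J' ≤ I' ⊔ J' := le_sup_right
  have hle1 : I' ^ (r + i + 1) * J' ^ (s - i) ≤ I' ^ r * (I' + J') ^ (s + 1) := by
    rw [Ideal.add_eq_sup, show r + i + 1 = r + (i + 1) from rfl, pow_add, mul_assoc]
    apply Ideal.mul_mono_right
    calc I' ^ (i + 1) * J' ^ (s - i)
        ≤ (I' ⊔ J') ^ (i + 1) * (I' ⊔ J') ^ (s - i) :=
          Ideal.mul_mono (Ideal.pow_right_mono hIP _) (Ideal.pow_right_mono hJP _)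
      _ = (I' ⊔ J') ^ (i + 1 + (s - i)) := (pow_add _ _ _).symm
      _ = (I' ⊔ J') ^ (s + 1) := by rw [show i + 1 + (s - i) = s + 1 by omega]
  have hle2 : I' ^ (r + i) * J' ^ (s - i + 1) ≤ I' ^ r * (I' + J') ^ (s + 1) := by
    rw [Ideal.add_eq_sup, show r + i = r + i from rfl, pow_add, mul_assoc]
    apply Ideal.mul_mono_right
    calc I' ^ i * J' ^ (s - i + 1)
        ≤ (I' ⊔ J') ^ i * (I' ⊔ J') ^ (s - i + 1) :=
          Ideal.mul_mono (Ideal.pow_right_mono hIP _) (Ideal.pow_right_mono hJP _)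
      _ = (I' ⊔ J') ^ (i + (s - i + 1)) := (pow_add _ _ _).symm
      _ = (I' ⊔ J') ^ (s + 1) := by rw [show i + (s - i + 1) = s + 1 by omega]
  exact Submodule.add_mem _ (hle1 hu') (hle2 hv')
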